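/- Let G be an étale groupoid and let A, B be compact open bisections of G. Then A ⊆ B if and only if A = B·A⁻¹·A, where the products are set products of bisections. -/
import Mathlib


/-- An étale topological groupoid structure on a space `Γ`: source/range maps,
a (partially meaningful, totally defined) multiplication, and inversion, such that
the algebraic groupoid axioms hold for composable elements, inversion and
multiplication are continuous, and the source and range maps are local
homeomorphisms. -/
class EtaleGroupoid (Γ : Type*) [TopologicalSpace Γ] where
  src : Γ → Γ
  rng : Γ → Γ
  mul : Γ → Γ → Γ
  inv : Γ → Γ
  src_src : ∀ x, src (src x) = src x
  rng_src : ∀ x, rng (src x) = src x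
  src_rng : ∀ x, src (rng x) = rng x
  rng_rng : ∀ x, rng (rng x) = rng x
  rng_mul : ∀ a b, src a = rng b → rng (mul a b) = rng a
  src_mul : ∀ a b, src a = rng b → src (mul a b) = src b
  mul_assoc : ∀ a b c, src a = rng b → src b = rng c →
      mul (mul a b) c = mul a (mul b c)
  unit_mul : ∀ a, mul (rng a) a = a
  mul_unit : ∀ a, mul a (src a) = a
  src_inv : ∀ a, src (inv a) = rng a
  rng_inv : ∀ a, rng (inv a) = src a
  inv_inv : ∀ a, inv (inv a) = a
  mul_inv : ∀ a, mul a (inv a) = rng a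
  inv_mul : ∀ a, mul (inv a) a = src a
  continuous_inv : Continuous inv
  continuous_mul :
      Continuous (fun p : {p : Γ × Γ // src p.1 = rng p.2} => mul p.1.1 p.1.2)
  isLocalHomeomorph_src : IsLocalHomeomorph src
  isLocalHomeomorph_rng : IsLocalHomeomorph rng

namespace EtaleGroupoid

variable (Γ : Type*) [TopologicalSpace Γ] [EtaleGroupoid Γ]

/-- The unit space `Γ⁽⁰⁾` of the groupoid. -/
def unitSpace : Set Γ := {x | src x = x}

variable {Γ}

/-- The set product of two subsets of the groupoid. -/
def setMul (A B : Set Γ) : Set Γ :=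
  {c | ∃ a ∈ A, ∃ b ∈ B, src a = rng b ∧ c = mul a b}

/-- The set inverse of a subset of the groupoid. -/
def setInv (A : Set Γ) : Set Γ := inv '' A

/-- A bisection: a subset on which both the source and the range maps are injective. -/
def IsBisection (B : Set Γ) : Prop := Set.InjOn src B ∧ Set.InjOn rng B

/-- A full bisection: a bisection whose source and range are the whole unit space. -/
def IsFullBisection (B : Set Γ) : Prop :=
  IsBisection B ∧ src '' B = unitSpace Γ ∧ rng '' B = unitSpace Γ

lemma src_mem_unitSpace (x : Γ) : src x ∈ unitSpace Γ := src_src x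

lemma rng_mem_unitSpace (x : Γ) : rng x ∈ unitSpace Γ := src_rng x

end EtaleGroupoid

open EtaleGroupoid

/-- For compact open bisections `A, B` of an étale groupoid, `A ⊆ B` if and only if
`A = B·A⁻¹·A`, where products are set products of bisections. -/
theorem subset_iff_eq_setMul
    (Γ : Type*) [TopologicalSpace Γ] [EtaleGroupoid Γ]
    (A B : Set Γ)
    (hAo : IsOpen A) (hAc : IsCompact A) (hA : IsBisection A)
    (hBo : IsOpen B) (hBc : IsCompact B) (hB : IsBisection B) :
    A ⊆ B ↔ A = setMul (setMul B (setInv A)) A := by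
  -- Key: any element of B·A⁻¹·A is of the form b with src b = src a₁ for some a₁ ∈ A.
  have key : ∀ c ∈ setMul (setMul B (setInv A)) A,
      ∃ b ∈ B, ∃ a₁ ∈ A, src b = src a₁ ∧ c = b := by
    rintro c ⟨x, ⟨b, hb, y, ⟨a₁, ha₁, rfl⟩, hsb, rfl⟩, a₂, ha₂, hsx, rfl⟩
    rw [rng_inv] at hsb
    rw [src_mul b (inv a₁) (by rw [rng_inv]; exact hsb), src_inv] at hsx
    have ha12 : a₁ = a₂ := hA.2 ha₁ ha₂ hsx
    subst ha12
    refine ⟨b, hb, a₁, ha₁, hsb, ?_⟩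
    rw [EtaleGroupoid.mul_assoc b (inv a₁) a₁ (by rw [rng_inv]; exact hsb) (src_inv a₁),
      inv_mul, ← hsb, mul_unit]
  constructor
  · intro hAB
    apply Set.Subset.antisymm
    · intro a ha
      refine ⟨mul a (inv a), ⟨a, hAB ha, inv a, ⟨a, ha, rfl⟩, (rng_inv a).symm, rfl⟩,
        a, ha, ?_, ?_⟩
      · rw [src_mul a (inv a) (rng_inv a).symm, src_inv]
      · rw [EtaleGroupoid.mul_inv, unit_mul]
    · intro c hc
      obtain ⟨b, hb, a₁, ha₁, hs, hcb⟩ := key c hc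
      have : b = a₁ := hB.1 hb (hAB ha₁) hs
      rw [hcb, this]; exact ha₁
  · intro hEq a ha
    rw [hEq] at ha
    obtain ⟨b, hb, a₁, ha₁, hs, hab⟩ := key a ha
    rw [hab]; exact hb
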